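/- arXiv:1008.1234 — 3 statements merged into one kernel-verified Lean document; each statement's English description precedes it below -/
import Mathlib

section
/- Let n ≥ 1 and let J¹, J² : ℝ^{2n} → ℝ^{2n} be ℝ-linear maps with (J¹)² = (J²)² = −id (linear complex structures). Let M ⊂ ℝ^{2n} be a hyperplane through the origin, say M = ker ℓ for a nonzero linear functional ℓ on ℝ^{2n}. Suppose that either M ∩ J¹(M) ≠ M ∩ J²(M), or the operator norm ‖J² − J¹‖ (with respect to the Euclidean norm) is strictly less than 2. Then there exists v ∈ M such that J¹v and J²v lie in the same connected component of ℝ^{2n} ∖ M, i.e., ℓ(J¹v)·ℓ(J²v) > 0. -/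
open Set MeasureTheory Filter
open scoped Topology

noncomputable section

section Defs

variable {E F E₁ E₂ : Type*}
  [NormedAddCommGroup E] [NormedSpace ℝ E] [NormedAddCommGroup F] [NormedSpace ℝ F]
  [NormedAddCommGroup E₁] [NormedSpace ℝ E₁] [NormedAddCommGroup E₂] [NormedSpace ℝ E₂]

/-- The Hölder class `C^{m+α}(S)`, with all derivatives up to order `m` bounded by `C`
and the `m`-th order derivative `α`-Hölder with constant `C` on `S`. -/
def CmHolderOnWith (m : ℕ) (α C : ℝ) (f : E → F) (S : Set E) : Prop :=
  ContDiffOn ℝ m f S ∧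
  (∀ i ≤ m, ∀ x ∈ S, ‖iteratedFDerivWithin ℝ i f S x‖ ≤ C) ∧
  ∀ x ∈ S, ∀ y ∈ S,
    ‖iteratedFDerivWithin ℝ m f S x - iteratedFDerivWithin ℝ m f S y‖ ≤ C * ‖x - y‖ ^ α

/-- `f` belongs to the Hölder class `C^{m+α}(S)`. -/
def CmHolderOn (m : ℕ) (α : ℝ) (f : E → F) (S : Set E) : Prop :=
  ∃ C, CmHolderOnWith m α C f S

/-- The local Hölder class `C^{m+α}_loc(S)` : `f` is `C^m` on `S` and its `m`-th order
derivatives are `α`-Hölder on every compact subset of `S`. -/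
def CmHolderLocOn (m : ℕ) (α : ℝ) (f : E → F) (S : Set E) : Prop :=
  ContDiffOn ℝ m f S ∧
  ∀ K ⊆ S, IsCompact K → ∃ C, ∀ x ∈ K, ∀ y ∈ K,
    ‖iteratedFDerivWithin ℝ m f S x - iteratedFDerivWithin ℝ m f S y‖ ≤ C * ‖x - y‖ ^ α

/-- `γ` is a relatively open subset of the boundary of `Ω`. -/
def RelOpenInBoundary {X : Type*} [TopologicalSpace X] (γ Ω : Set X) : Prop :=
  ∃ U : Set X, IsOpen U ∧ γ = frontier Ω ∩ U

/-- `v` is a tangent vector of `M` at `p` : the velocity of a curve inside `M` through `p`. -/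
def TangentVectorAt (M : Set E) (p v : E) : Prop :=
  ∃ c : ℝ → E, c 0 = p ∧ (∀ᶠ s in 𝓝 (0:ℝ), c s ∈ M) ∧ HasDerivAt c v 0

/-- A parameter set: the closure of a bounded open subset of a euclidean space. -/
def IsParamSet (P : Set E) : Prop :=
  ∃ U : Set E, IsOpen U ∧ Bornology.IsBounded U ∧ P = closure U

/-- Any two points of `S` can be joined by a smooth curve in `S` of length at most a
constant times their distance. -/
def ChordArc (S : Set E) : Prop :=
  ∃ C > 0, ∀ a ∈ S, ∀ b ∈ S, ∃ c : ℝ → E, ContDiff ℝ (⊤ : ℕ∞) c ∧ c 0 = a ∧ c 1 = b ∧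
    (∀ s ∈ Icc (0:ℝ) 1, c s ∈ S) ∧ (∫ s in Icc (0:ℝ) 1, ‖deriv c s‖) ≤ C * ‖b - a‖

/-- The space `Ĉ^{k+α,j}(S, P)` with all norms bounded by `C`:
for all `i ≤ j`, the `i`-th `t`-derivatives of `f(z,t)` exist, are continuous on `S × P`,
and belong to `C^{k+α}(S)` in `z` with norm at most `C`, uniformly in `t ∈ P`. -/
def MixedHolderWith (k : ℕ) (α : ℝ) (j : ℕ) (C : ℝ) (f : E₁ → E₂ → F)
    (S : Set E₁) (P : Set E₂) : Prop :=
  (∀ z ∈ S, ContDiffOn ℝ j (f z) P) ∧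
  (∀ i ≤ j, ContinuousOn
    (fun q : E₁ × E₂ => iteratedFDerivWithin ℝ i (f q.1) P q.2) (S ×ˢ P)) ∧
  (∀ i ≤ j, ∀ t ∈ P,
    CmHolderOnWith k α C (fun z => iteratedFDerivWithin ℝ i (f z) P t) S)

/-- Membership in the space `Ĉ^{k+α,j}(S, P)`. -/
def MixedHolder (k : ℕ) (α : ℝ) (j : ℕ) (f : E₁ → E₂ → F) (S : Set E₁) (P : Set E₂) : Prop :=
  ∃ C, MixedHolderWith k α j C f S P

/-- The space `C^{k+α,j}(S,P) = ⋂_{l ≤ j} Ĉ^{k-l+α,l}(S,P)`, with norm bound `C`. -/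
def MixedCWith (k : ℕ) (α : ℝ) (j : ℕ) (C : ℝ) (f : E₁ → E₂ → F) (S : Set E₁)
    (P : Set E₂) : Prop :=
  ∀ l ≤ j, MixedHolderWith (k - l) α l C f S P

/-- Membership in the space `C^{k+α,j}(S,P) = ⋂_{l ≤ j} Ĉ^{k-l+α,l}(S,P)`. -/
def MixedC (k : ℕ) (α : ℝ) (j : ℕ) (f : E₁ → E₂ → F) (S : Set E₁) (P : Set E₂) : Prop :=
  ∀ l ≤ j, MixedHolder (k - l) α l f S P

/-- The local space `Ĉ^{k+α,j}` : regularity on `S × P` with bounds on compact subsets of `S`. -/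
def MixedHolderLoc (k : ℕ) (α : ℝ) (j : ℕ) (f : E₁ → E₂ → F) (S : Set E₁) (P : Set E₂) : Prop :=
  (∀ z ∈ S, ContDiffOn ℝ j (f z) P) ∧
  (∀ i ≤ j, ContinuousOn
    (fun q : E₁ × E₂ => iteratedFDerivWithin ℝ i (f q.1) P q.2) (S ×ˢ P)) ∧
  (∀ i ≤ j, ∀ t ∈ P, ContDiffOn ℝ k (fun z => iteratedFDerivWithin ℝ i (f z) P t) S) ∧
  ∀ K ⊆ S, IsCompact K → ∃ C, ∀ i ≤ j, ∀ t ∈ P,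
    (∀ l ≤ k, ∀ x ∈ K,
      ‖iteratedFDerivWithin ℝ l (fun z => iteratedFDerivWithin ℝ i (f z) P t) S x‖ ≤ C) ∧
    ∀ x ∈ K, ∀ y ∈ K,
      ‖iteratedFDerivWithin ℝ k (fun z => iteratedFDerivWithin ℝ i (f z) P t) S x -
        iteratedFDerivWithin ℝ k (fun z => iteratedFDerivWithin ℝ i (f z) P t) S y‖
        ≤ C * ‖x - y‖ ^ α

/-- The local space `C^{k+α,j}_loc = ⋂_{l ≤ j} Ĉ^{k-l+α,l}_loc`. -/
def MixedCLoc (k : ℕ) (α : ℝ) (j : ℕ) (f : E₁ → E₂ → F) (S : Set E₁) (P : Set E₂) : Prop :=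
  ∀ l ≤ j, MixedHolderLoc (k - l) α l f S P

/-- Iterated directional (partial) derivative along a list of directions. -/
def partialDerivMulti : List E → (E → F) → (E → F)
  | [], g => g
  | v :: vs, g => partialDerivMulti vs fun x => lineDeriv ℝ g x v

end Defs

/-- The Wirtinger derivative `∂f/∂z = (∂_x f - i ∂_y f)/2`. -/
def wirtingerZ (f : ℂ → ℂ) (z : ℂ) : ℂ :=
  (fderiv ℝ f z 1 - Complex.I * fderiv ℝ f z Complex.I) / 2

/-- The Wirtinger derivative `∂f/∂z̄ = (∂_x f + i ∂_y f)/2`. -/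
def wirtingerZbar (f : ℂ → ℂ) (z : ℂ) : ℂ :=
  (fderiv ℝ f z 1 + Complex.I * fderiv ℝ f z Complex.I) / 2

/-- The Cauchy-Green operator `(T_Ω f)(z) = (1/π) ∫_Ω f(ζ)/(z-ζ) dA(ζ)`. -/
def cauchyGreen (Ω : Set ℂ) (f : ℂ → ℂ) (z : ℂ) : ℂ :=
  (Real.pi : ℂ)⁻¹ * ∫ ζ in Ω, f ζ / (z - ζ)

/-- An embedded curve of class `C^{m+α}` in `ℂ`. -/
def IsEmbeddedCurve (m : ℕ) (α : ℝ) (γ : Set ℂ) : Prop :=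
  ∃ ρ : ℝ → ℂ, Set.InjOn ρ (Ioo (-1) 1) ∧ γ = ρ '' Ioo (-1) 1 ∧
    CmHolderLocOn m α ρ (Ioo (-1) 1) ∧ ∀ s ∈ Ioo (-1:ℝ) 1, deriv ρ s ≠ 0

/-- An embedded curve of class `C¹` in `ℂ`. -/
def IsC1EmbeddedCurve (γ : Set ℂ) : Prop :=
  ∃ ρ : ℝ → ℂ, Set.InjOn ρ (Ioo (-1) 1) ∧ γ = ρ '' Ioo (-1) 1 ∧
    ContDiffOn ℝ 1 ρ (Ioo (-1) 1) ∧ ∀ s ∈ Ioo (-1:ℝ) 1, deriv ρ s ≠ 0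

/-- A planar domain with boundary of class `C^{m+α}` : near each boundary point, after a
rotation and translation, the boundary is the graph of a `C^{m+α}` function. -/
def PlanarBoundaryClass (m : ℕ) (α : ℝ) (Ω : Set ℂ) : Prop :=
  ∀ p ∈ frontier Ω, ∃ V : Set ℂ, IsOpen V ∧ p ∈ V ∧
    ∃ (e : ℂ) (h : ℝ → ℝ), ‖e‖ = 1 ∧ CmHolderLocOn m α h univ ∧
      frontier Ω ∩ V = {z ∈ V | (e * (z - p)).im = h ((e * (z - p)).re)}

/-- A real hypersurface of class `C^{m+α}` in `ℝ^N`, described by local defining functions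
of class `C^{m+α}` with nonvanishing differential (equivalently, local graphs after an
orthogonal change of coordinates). -/
def IsHypersurfaceOfClass {N : ℕ} (m : ℕ) (α : ℝ)
    (M : Set (EuclideanSpace ℝ (Fin N))) : Prop :=
  ∀ p ∈ M, ∃ V : Set (EuclideanSpace ℝ (Fin N)), IsOpen V ∧ p ∈ V ∧
    ∃ r : EuclideanSpace ℝ (Fin N) → ℝ, CmHolderLocOn m α r V ∧
      (∀ x ∈ V, fderiv ℝ r x ≠ 0) ∧ M ∩ V = {x ∈ V | r x = 0}

/-- An almost complex structure of class `C^{k+α}` on the set `S ⊆ ℝ^N`. -/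
def IsACSOn {N : ℕ} (k : ℕ) (α : ℝ)
    (J : EuclideanSpace ℝ (Fin N) → (EuclideanSpace ℝ (Fin N) →L[ℝ] EuclideanSpace ℝ (Fin N)))
    (S : Set (EuclideanSpace ℝ (Fin N))) : Prop :=
  CmHolderLocOn k α J S ∧ ∀ p ∈ S, ∀ v, J p (J p v) = -v

/-- The operator `(I + T_Ω a ∂_z)` with parameter. -/
def opTa {E₂ : Type*} (Ω : Set ℂ) (a : ℂ → E₂ → ℂ) (f : ℂ → E₂ → ℂ) : ℂ → E₂ → ℂ :=
  fun z t => f z t + cauchyGreen Ω (fun ζ => a ζ t * wirtingerZ (fun w => f w t) ζ) z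

/-- The operator `(I + T_Ω a ∂_z)` without parameter. -/
def opTa1 (Ω : Set ℂ) (a : ℂ → ℂ) (f : ℂ → ℂ) : ℂ → ℂ :=
  fun z => f z + cauchyGreen Ω (fun ζ => a ζ * wirtingerZ f ζ) z

/-- The matrix operator `(I + T_Ω A ∂_z)` with parameter, acting componentwise. -/
def opTA {E₂ : Type*} {m : ℕ} (Ω : Set ℂ) (A : Fin m → Fin m → ℂ → E₂ → ℂ)
    (f : ℂ → E₂ → Fin m → ℂ) : ℂ → E₂ → Fin m → ℂ :=
  fun z t p => f z t p +
    cauchyGreen Ω (fun ζ => ∑ q, A p q ζ t * wirtingerZ (fun w => f w t q) ζ) z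

/-- The matrix operator `(I + T_Ω A ∂̄_z)` (where `∂̄_z f = conj (∂_z f)`) with parameter. -/
def opTAbar {E₂ : Type*} {m : ℕ} (Ω : Set ℂ) (A : Fin m → Fin m → ℂ → E₂ → ℂ)
    (f : ℂ → E₂ → Fin m → ℂ) : ℂ → E₂ → Fin m → ℂ :=
  fun z t p => f z t p +
    cauchyGreen Ω
      (fun ζ => ∑ q, A p q ζ t * (starRingEnd ℂ) (wirtingerZ (fun w => f w t q) ζ)) z

/-- `L` is a bounded bijection of `Ĉ^{k+α,j}(S,P)` (valued in `F`) with bounded inverse. -/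
def IsBoundedBijWith {E₂ F : Type*} [NormedAddCommGroup E₂] [NormedSpace ℝ E₂]
    [NormedAddCommGroup F] [NormedSpace ℝ F]
    (k : ℕ) (α : ℝ) (j : ℕ) (L : (ℂ → E₂ → F) → (ℂ → E₂ → F)) (S : Set ℂ) (P : Set E₂) :
    Prop :=
  (∃ C > 0,
    (∀ f M, 0 ≤ M → MixedHolderWith k α j M f S P → MixedHolderWith k α j (C * M) (L f) S P) ∧
    (∀ f M, 0 ≤ M → MixedHolder k α j f S P → MixedHolderWith k α j M (L f) S P →
      MixedHolderWith k α j (C * M) f S P)) ∧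
  (∀ f g, MixedHolder k α j f S P → MixedHolder k α j g S P →
    (∀ z ∈ S, ∀ t ∈ P, L f z t = L g z t) → ∀ z ∈ S, ∀ t ∈ P, f z t = g z t) ∧
  (∀ g, MixedHolder k α j g S P → ∃ f, MixedHolder k α j f S P ∧
    ∀ z ∈ S, ∀ t ∈ P, L f z t = g z t)

/-- The upper half-disc `𝔻⁺`. -/
def Dplus : Set ℂ := {z | ‖z‖ < 1 ∧ 0 < z.im}

/-- The upper half-disc `𝔻_r⁺` of radius `r`. -/
def DplusR (r : ℝ) : Set ℂ := {z | ‖z‖ < r ∧ 0 < z.im}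

/-- The Cauchy-type integral `C₀f(z) = (1/2πi) ∫_{-1}^1 f(s)/(τ(s) - τ(z)) ds`. -/
def cauchyTypeInt (τ : ℂ → ℂ) (f : ℝ → ℂ) (z : ℂ) : ℂ :=
  (2 * Real.pi * Complex.I)⁻¹ * ∫ s in (-1:ℝ)..1, f s / (τ (s : ℂ) - τ z)

/-- `f` has non-tangential limit `L` at the boundary point `x` of `Ω`. -/
def NontangentialLimit (f : ℂ → ℂ) (Ω : Set ℂ) (x L : ℂ) : Prop :=
  ∀ M : ℝ, 1 < M →
    Tendsto f (𝓝[{z ∈ Ω | dist z x < M * Metric.infDist z (frontier Ω)}] x) (𝓝 L)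

/-- The list of `y`-directions `∂_y^I` given by a multi-index `I`. -/
def yDirList (n m' : ℕ) (I : Fin m' → ℕ) :
    List (EuclideanSpace ℝ (Fin n) × EuclideanSpace ℝ (Fin m')) :=
  (List.finRange m').flatMap fun l => List.replicate (I l) (0, EuclideanSpace.single l 1)

end
section AuxLin

variable {E : Type*} [NormedAddCommGroup E] [NormedSpace ℝ E]

lemma aux_exists_one (ℓ : E →L[ℝ] ℝ) (hℓ : ℓ ≠ 0) : ∃ x, ℓ x = 1 := by
  have hx : ∃ x, ℓ x ≠ 0 := by
    by_contra hx
    push_neg at hx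
    exact hℓ (ContinuousLinearMap.ext fun x => by simpa using hx x)
  obtain ⟨x, hx⟩ := hx
  exact ⟨(ℓ x)⁻¹ • x, by simp [inv_mul_cancel₀ hx]⟩

lemma aux_nondeg (ℓ : E →L[ℝ] ℝ) (hℓ : ℓ ≠ 0) (J : E →L[ℝ] E)
    (hJ : ∀ v, J (J v) = -v) : ∃ w, ℓ w = 0 ∧ ℓ (J w) ≠ 0 := by
  by_contra hk
  push_neg at hk
  obtain ⟨x, hx⟩ := aux_exists_one ℓ hℓ
  have key : ∀ y, ℓ (J y) = ℓ (J x) * ℓ y := by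
    intro y
    have h0 : ℓ (y - ℓ y • x) = 0 := by simp [hx]
    have h1 := hk _ h0
    simp only [map_sub, _root_.map_smul, smul_eq_mul] at h1
    linarith
  have h1 : ℓ (J (J x)) = ℓ (J x) * ℓ (J x) := by rw [key, key, hx, mul_one]
  have h2 : ℓ (J (J x)) = -1 := by rw [hJ, map_neg, hx]
  nlinarith

lemma aux_ker (ℓ p q : E →L[ℝ] ℝ)
    (hw : ∃ w, ℓ w = 0 ∧ p w ≠ 0)
    (hcon : ∀ v, ℓ v = 0 → p v * q v ≤ 0) :
    ∀ v, ℓ v = 0 → p v = 0 → q v = 0 := by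
  intro v hv hpv
  by_contra hqv
  obtain ⟨w, hw0, hpw⟩ := hw
  set a := p w with ha
  set b := q v with hb
  set d := q w with hd
  set δ : ℝ := 1 / (2 * (1 + |a * d|)) with hδdef
  have hδpos : 0 < δ := by positivity
  set t : ℝ := a * b * δ with ht
  have hu : ℓ (v + t • w) = 0 := by simp [hv, hw0]
  have hle := hcon _ hu
  have hpu : p (v + t • w) = t * a := by
    simp only [map_add, _root_.map_smul, smul_eq_mul, hpv, ← ha]; try ring
  have hqu : q (v + t • w) = b + t * d := by
    simp only [map_add, _root_.map_smul, smul_eq_mul, ← hb, ← hd]; try ring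
  rw [hpu, hqu] at hle
  have heq : t * a * (b + t * d) = δ * (a*a) * (b*b) * (1 + δ * (a*d)) := by
    rw [ht]; ring
  have habs : δ * |a * d| ≤ 1/2 := by
    rw [hδdef, div_mul_eq_mul_div, one_mul, div_le_iff₀ (by positivity)]
    have := abs_nonneg (a * d)
    nlinarith
  have hge : (1:ℝ)/2 ≤ 1 + δ * (a*d) := by
    have h1 : -(δ * |a*d|) ≤ δ * (a*d) := by
      have := neg_abs_le (a*d)
      nlinarith
    linarith
  have hpos : 0 < δ * (a*a) * (b*b) * (1 + δ * (a*d)) :=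
    mul_pos (mul_pos (mul_pos hδpos (mul_self_pos.mpr hpw)) (mul_self_pos.mpr hqv))
      (by linarith)
  linarith [heq.ge, heq.le]

end AuxLin

/-- Lemma 3.1: given two linear complex structures `J¹, J²` on `ℝ^{2n}` and a hyperplane
`M = ker ℓ`, if `M ∩ J¹(M) ≠ M ∩ J²(M)` or `‖J² - J¹‖ < 2`, then some `v ∈ M` has
`J¹v` and `J²v` strictly on the same side of `M`. -/
theorem linear_structures_same_side
    (n : ℕ) (hn : 0 < n)
    (J₁ J₂ : EuclideanSpace ℝ (Fin (2 * n)) →L[ℝ] EuclideanSpace ℝ (Fin (2 * n)))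
    (hJ₁ : ∀ v, J₁ (J₁ v) = -v) (hJ₂ : ∀ v, J₂ (J₂ v) = -v)
    (ℓ : EuclideanSpace ℝ (Fin (2 * n)) →L[ℝ] ℝ) (hℓ : ℓ ≠ 0)
    (h : ({x | ℓ x = 0} ∩ (⇑J₁ '' {x | ℓ x = 0}) ≠ {x | ℓ x = 0} ∩ (⇑J₂ '' {x | ℓ x = 0}))
      ∨ ‖J₂ - J₁‖ < 2) :
    ∃ v, ℓ v = 0 ∧ 0 < ℓ (J₁ v) * ℓ (J₂ v) := by
  by_contra hcon
  push_neg at hcon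
  -- hcon : ∀ v, ℓ v = 0 → ℓ (J₁ v) * ℓ (J₂ v) ≤ 0
  obtain ⟨w₀, hw0, hpw0⟩ := aux_nondeg ℓ hℓ J₁ hJ₁
  obtain ⟨w₁, hw1, hqw1⟩ := aux_nondeg ℓ hℓ J₂ hJ₂
  have hker : ∀ v, ℓ v = 0 → ℓ (J₁ v) = 0 → ℓ (J₂ v) = 0 := by
    have := aux_ker ℓ (ℓ.comp J₁) (ℓ.comp J₂) ⟨w₀, hw0, hpw0⟩
      (fun v hv => hcon v hv)
    intro v hv h1
    exact this v hv h1
  have hker' : ∀ v, ℓ v = 0 → ℓ (J₂ v) = 0 → ℓ (J₁ v) = 0 := by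
    have := aux_ker ℓ (ℓ.comp J₂) (ℓ.comp J₁) ⟨w₁, hw1, hqw1⟩
      (fun v hv => by have := hcon v hv; simpa [mul_comm] using this)
    intro v hv h1
    exact this v hv h1
  set c' : ℝ := ℓ (J₂ w₀) / ℓ (J₁ w₀) with hc'def
  have hqw0 : ℓ (J₂ w₀) ≠ 0 := fun hq => hpw0 (hker' w₀ hw0 hq)
  have hc'neg : c' < 0 := by
    have hle := hcon w₀ hw0
    have hlt : ℓ (J₁ w₀) * ℓ (J₂ w₀) < 0 :=
      lt_of_le_of_ne hle (mul_ne_zero hpw0 hqw0)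
    rw [hc'def]
    rcases mul_neg_iff.mp hlt with ⟨h1, h2⟩ | ⟨h1, h2⟩
    · exact div_neg_of_neg_of_pos h2 h1
    · exact div_neg_of_pos_of_neg h2 h1
  have hprop : ∀ v, ℓ v = 0 → ℓ (J₂ v) = c' * ℓ (J₁ v) := by
    intro v hv
    have h0 : ℓ (v - (ℓ (J₁ v) / ℓ (J₁ w₀)) • w₀) = 0 := by
      simp [hv, hw0]
    have h1 : ℓ (J₁ (v - (ℓ (J₁ v) / ℓ (J₁ w₀)) • w₀)) = 0 := by
      simp only [map_sub, _root_.map_smul, smul_eq_mul]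
      field_simp
      ring
    have h2 := hker _ h0 h1
    simp only [map_sub, _root_.map_smul, smul_eq_mul] at h2
    rw [hc'def]
    field_simp at h2 ⊢
    linarith
  rcases h with hne | hnorm
  ·
    apply hne
    have himg : ∀ (J : EuclideanSpace ℝ (Fin (2 * n)) →L[ℝ] EuclideanSpace ℝ (Fin (2 * n))),
        (∀ v, J (J v) = -v) → (⇑J '' {x | ℓ x = 0}) = {x | ℓ (J x) = 0} := by
      intro J hJ
      ext x
      constructor
      · rintro ⟨m, hm, rfl⟩
        simp only [mem_setOf_eq] at hm ⊢
        rw [hJ m, map_neg, hm, neg_zero]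
      · intro hx
        simp only [mem_setOf_eq] at hx
        exact ⟨-(J x), by simp [hx], by rw [map_neg, hJ, neg_neg]⟩
    rw [himg J₁ hJ₁, himg J₂ hJ₂]
    ext x
    simp only [mem_inter_iff, mem_setOf_eq]
    constructor
    · rintro ⟨hx, hx1⟩
      exact ⟨hx, by rw [hprop x hx, hx1, mul_zero]⟩
    · rintro ⟨hx, hx2⟩
      refine ⟨hx, ?_⟩
      have := hprop x hx
      rw [hx2] at this
      have hc0 : c' ≠ 0 := ne_of_lt hc'neg
      field_simp at this
      tauto
  · -- norm case
    obtain ⟨x₀, hx₀⟩ := aux_exists_one ℓ hℓ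
    set μ : ℝ := ℓ (J₂ x₀) - c' * ℓ (J₁ x₀) with hμdef
    have hext : ∀ x, ℓ (J₂ x) = c' * ℓ (J₁ x) + μ * ℓ x := by
      intro x
      have h0 : ℓ (x - ℓ x • x₀) = 0 := by simp [hx₀]
      have h1 := hprop _ h0
      simp only [map_sub, _root_.map_smul, smul_eq_mul] at h1
      rw [hμdef]
      ring_nf
      ring_nf at h1
      linarith
    have hc0 : c' ≠ 0 := ne_of_lt hc'neg
    have hJ12 : ∀ x, ℓ (J₁ (J₂ x)) =
        (-(1 + μ^2) / c') * ℓ x - μ * ℓ (J₁ x) := by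
      intro x
      have h1 := hext (J₂ x)
      rw [hJ₂ x, map_neg] at h1
      have h2 := hext x
      have h3 : c' * ℓ (J₁ (J₂ x)) = -(1 + μ^2) * ℓ x - μ * c' * ℓ (J₁ x) := by
        linear_combination -h1 - μ * h2
      field_simp
      linear_combination h3
    set K : ℝ := -2 + c' + (1 + μ^2) / c' with hKdef
    have key : ∀ x, ℓ ((J₂ - J₁) ((J₂ - J₁) x)) = K * ℓ x := by
      intro x
      simp only [ContinuousLinearMap.sub_apply, map_sub]
      have e1 : ℓ (J₂ (J₂ x)) = -ℓ x := by rw [hJ₂, map_neg]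
      have e2 : ℓ (J₁ (J₁ x)) = -ℓ x := by rw [hJ₁, map_neg]
      have e3 : ℓ (J₂ (J₁ x)) = c' * ℓ (J₁ (J₁ x)) + μ * ℓ (J₁ x) := hext (J₁ x)
      rw [e2] at e3
      have e4 := hJ12 x
      rw [hKdef, e1, e2, e3, e4]
      field_simp
      ring
    have hK4 : K ≤ -4 := by
      have hdiv : (1 + μ^2) / c' ≤ -2 - c' := by
        rw [div_le_iff_of_neg hc'neg]
        nlinarith [sq_nonneg (c' + 1), sq_nonneg μ]
      rw [hKdef]; linarith
    clear_value K μ c'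
    have hAn : ‖J₂ - J₁‖ * ‖J₂ - J₁‖ < 4 := by
      nlinarith [norm_nonneg (J₂ - J₁)]
    have hℓpos : 0 < ‖ℓ‖ := norm_pos_iff.mpr hℓ
    have hKpos : 0 < |K| := by rw [abs_of_nonpos (by linarith)]; linarith
    have hbound : ‖ℓ‖ ≤ ‖ℓ‖ * (‖J₂ - J₁‖ * ‖J₂ - J₁‖) / |K| := by
      apply ContinuousLinearMap.opNorm_le_bound
      · positivity
      · intro x
        have h1 : ‖ℓ ((J₂ - J₁) ((J₂ - J₁) x))‖ ≤ ‖ℓ‖ * (‖J₂ - J₁‖ * (‖J₂ - J₁‖ * ‖x‖)) := by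
          calc ‖ℓ ((J₂ - J₁) ((J₂ - J₁) x))‖
              ≤ ‖ℓ‖ * ‖(J₂ - J₁) ((J₂ - J₁) x)‖ := ℓ.le_opNorm _
            _ ≤ ‖ℓ‖ * (‖J₂ - J₁‖ * ‖(J₂ - J₁) x‖) := by
                gcongr
                exact (J₂ - J₁).le_opNorm _
            _ ≤ ‖ℓ‖ * (‖J₂ - J₁‖ * (‖J₂ - J₁‖ * ‖x‖)) := by
                gcongr
                exact (J₂ - J₁).le_opNorm _
        rw [key x] at h1
        rw [Real.norm_eq_abs, abs_mul] at h1
        rw [Real.norm_eq_abs, div_mul_eq_mul_div, le_div_iff₀ hKpos]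
        calc |ℓ x| * |K| = |K| * |ℓ x| := by ring
          _ ≤ ‖ℓ‖ * (‖J₂ - J₁‖ * (‖J₂ - J₁‖ * ‖x‖)) := h1
          _ = ‖ℓ‖ * (‖J₂ - J₁‖ * ‖J₂ - J₁‖) * ‖x‖ := by ring
    have h4K : (4:ℝ) ≤ |K| := by rw [abs_of_nonpos (by linarith)]; linarith
    have hfin : ‖ℓ‖ * |K| ≤ ‖ℓ‖ * (‖J₂ - J₁‖ * ‖J₂ - J₁‖) := by
      calc ‖ℓ‖ * |K| ≤ ‖ℓ‖ * (‖J₂ - J₁‖ * ‖J₂ - J₁‖) / |K| * |K| :=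
            mul_le_mul_of_nonneg_right hbound (le_of_lt hKpos)
        _ = ‖ℓ‖ * (‖J₂ - J₁‖ * ‖J₂ - J₁‖) := div_mul_cancel₀ _ (ne_of_gt hKpos)
    have hKle : |K| ≤ ‖J₂ - J₁‖ * ‖J₂ - J₁‖ := (mul_le_mul_iff_right₀ hℓpos).mp hfin
    linarith [h4K, hAn, hKle]
end

section
/- Let k and n be positive integers and let ε > 0. Then there exist a positive integer N depending only on k and n, vectors v₁, …, v_N ∈ ℝ^n of the form v_j = (1, v_j′) with v_j′ ∈ ℝ^{n−1} and |v_j′| < ε, and real constants c_{α,j}, such that for every multi-index α with |α| = k, the identity ξ^α = Σ_{j=1}^N c_{α,j} (v_j · ξ)^k holds for all ξ ∈ ℝ^n. (Equivalently, every k-th order partial differential operator ∂^α with constant coefficients is a linear combination of the powers (v_j · ∂)^k.) -/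
open Set MeasureTheory Filter
open scoped Topology

open Finset

private lemma vandermonde_orth (k : ℕ) :
    ∃ E : Matrix (Fin (k+1)) (Fin (k+1)) ℝ,
      ∀ m m' : Fin (k+1), (∑ t : Fin (k+1), E m t * ((t : ℕ) : ℝ) ^ (m' : ℕ)) =
        if m = m' then 1 else 0 := by
  set V : Matrix (Fin (k+1)) (Fin (k+1)) ℝ :=
    Matrix.vandermonde (fun i : Fin (k+1) => ((i : ℕ) : ℝ)) with hV
  have hdet : IsUnit V.det := by
    rw [isUnit_iff_ne_zero, hV, Ne, Matrix.det_vandermonde_eq_zero_iff]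
    rintro ⟨i, j, hij, hne⟩
    exact hne (Fin.ext (Nat.cast_injective hij))
  refine ⟨V⁻¹, fun m m' => ?_⟩
  have h2 := congrFun (congrFun (Matrix.nonsing_inv_mul V hdet) m) m'
  rw [Matrix.mul_apply] at h2
  simp only [hV, Matrix.vandermonde_apply] at h2
  rw [Matrix.one_apply] at h2
  exact h2

private lemma sum_prod_erase' {n k : ℕ} (i0 : Fin n) (F : Fin n → Fin (k+1) → ℝ) :
    ∑ u : Fin n → Fin (k+1), ∏ i ∈ Finset.univ.erase i0, F i (u i)
      = ((k : ℝ) + 1) * ∏ i ∈ Finset.univ.erase i0, ∑ j : Fin (k+1), F i j := by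
  classical
  have h1 : ∀ u : Fin n → Fin (k+1),
      (∏ i ∈ Finset.univ.erase i0, F i (u i))
        = ∏ i, (if i = i0 then (1:ℝ) else F i (u i)) := by
    intro u
    rw [← Finset.mul_prod_erase Finset.univ _ (Finset.mem_univ i0), if_pos rfl, one_mul]
    exact Finset.prod_congr rfl fun i hi => by rw [if_neg (Finset.ne_of_mem_erase hi)]
  simp_rw [h1]
  have h2 : ∑ u : Fin n → Fin (k+1), ∏ i, (if i = i0 then (1:ℝ) else F i (u i))
      = ∏ i, ∑ j : Fin (k+1), (if i = i0 then (1:ℝ) else F i j) :=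
    (Fintype.prod_sum (fun i j => if i = i0 then (1:ℝ) else F i j)).symm
  rw [h2, ← Finset.mul_prod_erase Finset.univ _ (Finset.mem_univ i0)]
  have h3 : (∑ j : Fin (k+1), if i0 = i0 then (1:ℝ) else F i0 j) = (k:ℝ)+1 := by
    simp [Finset.card_univ]
  rw [h3]
  congr 1
  exact Finset.prod_congr rfl fun i hi => Finset.sum_congr rfl fun j _ => by
    rw [if_neg (Finset.ne_of_mem_erase hi)]

/-- Lemma 3.5 (i): every monomial `ξ^a` of degree `k` is a fixed linear combination of
`k`-th powers `(v_j · ξ)^k` with `v_j = (1, v_j')` and `|v_j'| < ε`; the number `N` of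
vectors depends only on `k` and `n`. -/
theorem monomials_from_powers_of_directions
    (k n : ℕ) (hk : 0 < k) (hn : 0 < n) :
    ∃ N : ℕ, ∀ ε : ℝ, 0 < ε →
      ∃ (v : Fin N → (Fin n → ℝ)) (c : (Fin n → ℕ) → Fin N → ℝ),
        (∀ j : Fin N, v j ⟨0, hn⟩ = 1 ∧
          Real.sqrt (∑ i ∈ Finset.univ.erase (⟨0, hn⟩ : Fin n), v j i ^ 2) < ε) ∧
        ∀ a : Fin n → ℕ, (∑ i, a i) = k → ∀ ξ : Fin n → ℝ,
          (∏ i, ξ i ^ a i) = ∑ j, c a j * (∑ i, v j i * ξ i) ^ k := by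
  classical
  obtain ⟨E, hE⟩ := vandermonde_orth k
  set i0 : Fin n := ⟨0, hn⟩ with hi0
  set s : Finset (Fin n) := Finset.univ.erase i0 with hs
  refine ⟨Fintype.card (Fin n → Fin (k+1)), fun ε hε => ?_⟩
  set e := (Fintype.equivFin (Fin n → Fin (k+1))).symm with he
  have hkn1 : (0:ℝ) < (k:ℝ)^2 * n + 1 := by positivity
  set δ : ℝ := ε / ((k:ℝ)^2 * n + 1) with hδdef
  have hδ : 0 < δ := div_pos hε hkn1
  set v : (Fin n → Fin (k+1)) → Fin n → ℝ :=
    (fun u i => if i = i0 then 1 else δ * ((u i : ℕ) : ℝ)) with hv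
  set aF : (Fin n → ℕ) → Fin n → Fin (k+1) :=
    (fun a i => ⟨min (a i) k, Nat.lt_succ_of_le (min_le_right _ _)⟩) with haF
  set c : (Fin n → ℕ) → (Fin n → Fin (k+1)) → ℝ := (fun a u =>
    (((k:ℝ) + 1) * (k.choose (k - a i0)) * δ ^ (k - a i0) *
      (Nat.multinomial s a))⁻¹ *
      ∏ i ∈ s, E (aF a i) (u i)) with hc
  refine ⟨fun j => v (e j), fun a j => c a (e j), fun j => ⟨if_pos rfl, ?_⟩, ?_⟩
  · -- size bound on the vectors
    rw [Real.sqrt_lt' hε]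
    have hb : ∀ i ∈ s, (v (e j) i)^2 ≤ (δ * k)^2 := by
      intro i hi
      have hne : i ≠ i0 := Finset.ne_of_mem_erase hi
      rw [hv]; simp only [if_neg hne]
      have h2 : (((e j) i : ℕ) : ℝ) ≤ (k : ℝ) := by exact_mod_cast Fin.is_le _
      have h1 : (0:ℝ) ≤ ((e j i : ℕ) : ℝ) := by positivity
      exact pow_le_pow_left₀ (mul_nonneg hδ.le h1)
        (mul_le_mul_of_nonneg_left h2 hδ.le) 2
    have hcard : (s.card : ℝ) ≤ (n : ℝ) := by
      have h := Finset.card_le_univ s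
      simp only [Fintype.card_fin] at h
      exact_mod_cast h
    have hsum : ∑ i ∈ s, (v (e j) i)^2 ≤ (n : ℝ) * (δ * k)^2 := by
      calc ∑ i ∈ s, (v (e j) i)^2 ≤ ∑ _i ∈ s, (δ*k)^2 := Finset.sum_le_sum hb
      _ = (s.card : ℝ) * (δ*k)^2 := by rw [Finset.sum_const, nsmul_eq_mul]
      _ ≤ (n : ℝ) * (δ*k)^2 := by nlinarith [sq_nonneg (δ*k)]
    have hεδ : ε = δ * ((k:ℝ)^2 * n + 1) := by
      rw [hδdef, div_mul_cancel₀ _ (ne_of_gt hkn1)]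
    have hn1 : (1:ℝ) ≤ (n:ℝ) := by exact_mod_cast hn
    nlinarith [sq_nonneg ((k:ℝ)^2 * n), mul_pos hδ hδ, sq_nonneg ((k:ℝ)*n),
      mul_pos (mul_pos hδ hδ) (mul_pos hkn1 hkn1)]
  · -- the identity
    intro a ha ξ
    have hai : ∀ i, a i ≤ k := fun i => ha ▸
      Finset.single_le_sum (fun i _ => Nat.zero_le (a i)) (Finset.mem_univ i)
    set m0 : ℕ := k - a i0 with hm0
    have hsum_s : ∑ i ∈ s, a i = m0 := by
      have h := Finset.sum_erase_add Finset.univ a (Finset.mem_univ i0)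
      rw [ha] at h
      rw [hs]; omega
    have hmin : ∀ i, min (a i) k = a i := fun i => min_eq_left (hai i)
    set S : (Fin n → Fin (k+1)) → ℝ := (fun u => ∑ i ∈ s, ((u i : ℕ) : ℝ) * ξ i) with hS
    have hdot : ∀ u, (∑ i, v u i * ξ i) = δ * S u + ξ i0 := by
      intro u
      rw [← Finset.sum_erase_add Finset.univ _ (Finset.mem_univ i0)]
      congr 1
      · simp only [hS]
        rw [Finset.mul_sum]
        refine Finset.sum_congr rfl fun i hi => ?_
        simp only [hv]
        rw [if_neg (Finset.ne_of_mem_erase hi)]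
        ring
      · simp [hv]
    -- the key collapsing sum over u
    have hU : ∀ m ≤ k,
        (∑ u : Fin n → Fin (k+1), (∏ i ∈ s, E (aF a i) (u i)) * S u ^ m)
          = if m = m0 then
              ((k:ℝ)+1) * (Nat.multinomial s a : ℝ) * ∏ i ∈ s, ξ i ^ a i
            else 0 := by
      intro m hm
      have hSm : ∀ u : Fin n → Fin (k+1), S u ^ m = ∑ b ∈ Finset.piAntidiag s m,
          (Nat.multinomial s b : ℝ) * ∏ i ∈ s, (((u i : ℕ) : ℝ) * ξ i) ^ b i :=
        fun u => Finset.sum_pow_eq_sum_piAntidiag s _ m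
      have step1 : (∑ u : Fin n → Fin (k+1), (∏ i ∈ s, E (aF a i) (u i)) * S u ^ m)
          = ∑ b ∈ Finset.piAntidiag s m, (Nat.multinomial s b : ℝ) *
              (∏ i ∈ s, ξ i ^ b i) *
              (∑ u : Fin n → Fin (k+1),
                ∏ i ∈ s, (E (aF a i) (u i) * ((u i : ℕ) : ℝ) ^ b i)) := by
        simp_rw [hSm, Finset.mul_sum]
        rw [Finset.sum_comm]
        refine Finset.sum_congr rfl fun b _ => Finset.sum_congr rfl fun u _ => ?_
        simp_rw [mul_pow]
        rw [Finset.prod_mul_distrib, Finset.prod_mul_distrib]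
        ring
      rw [step1]
      have step2 : ∀ b ∈ Finset.piAntidiag s m,
          (∑ u : Fin n → Fin (k+1),
              ∏ i ∈ s, (E (aF a i) (u i) * ((u i : ℕ) : ℝ) ^ b i))
            = ((k:ℝ)+1) * (if ∀ i ∈ s, a i = b i then 1 else 0) := by
        intro b hb
        obtain ⟨hbsum, hbsupp⟩ := Finset.mem_piAntidiag.1 hb
        have hbk : ∀ i ∈ s, b i ≤ k := fun i hi =>
          le_trans (hbsum ▸ Finset.single_le_sum (fun i _ => Nat.zero_le (b i)) hi) hm
        rw [sum_prod_erase' i0 (fun i j => E (aF a i) j * ((j : ℕ) : ℝ) ^ b i)]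
        congr 1
        calc (∏ i ∈ Finset.univ.erase i0, ∑ j : Fin (k+1),
                E (aF a i) j * ((j : ℕ) : ℝ) ^ b i)
            = ∏ i ∈ s, (if a i = b i then (1:ℝ) else 0) := by
              refine Finset.prod_congr (by rw [hs]) fun i hi => ?_
              have hEor := hE (aF a i) ⟨b i, Nat.lt_succ_of_le (hbk i hi)⟩
              simp only [Fin.val_mk] at hEor
              rw [hEor]
              congr 1
              simp only [haF, Fin.mk.injEq, hmin i]
          _ = if ∀ i ∈ s, a i = b i then 1 else 0 := by convert Finset.prod_boole
      rw [Finset.sum_congr rfl fun b hb => by rw [step2 b hb]]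
      by_cases hmm : m = m0
      · rw [if_pos hmm]
        set a' : Fin n → ℕ := (fun i => if i ∈ s then a i else 0) with ha'
        have ha'mem : a' ∈ Finset.piAntidiag s m := by
          rw [Finset.mem_piAntidiag]
          constructor
          · rw [hmm, ← hsum_s]
            exact Finset.sum_congr rfl fun i hi => by rw [ha']; simp [hi]
          · intro i hii
            by_contra hns
            rw [ha'] at hii; simp [hns] at hii
        rw [Finset.sum_eq_single_of_mem a' ha'mem]
        · have h1 : (∀ i ∈ s, a i = a' i) := fun i hi => by rw [ha']; simp [hi]
          rw [if_pos h1, mul_one]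
          have h2 : Nat.multinomial s a' = Nat.multinomial s a := by
            rw [Nat.multinomial, Nat.multinomial,
              Finset.sum_congr rfl fun i hi => (h1 i hi).symm,
              Finset.prod_congr rfl fun i hi => by rw [← h1 i hi]]
          have h3 : (∏ i ∈ s, ξ i ^ a' i) = ∏ i ∈ s, ξ i ^ a i :=
            Finset.prod_congr rfl fun i hi => by rw [← h1 i hi]
          rw [h2, h3]; ring
        · intro b hb hne
          rw [if_neg, mul_zero, mul_zero]
          intro hall
          apply hne
          obtain ⟨hbsum, hbsupp⟩ := Finset.mem_piAntidiag.1 hb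
          funext i
          by_cases hi : i ∈ s
          · rw [ha']; simp only [hi, if_pos]; exact (hall i hi).symm
          · rw [ha']; simp only [hi, if_neg, ite_eq_right_iff]
            by_contra hbi
            exact hi (hbsupp i (by simpa using hbi))
      · rw [if_neg hmm]
        refine Finset.sum_eq_zero fun b hb => ?_
        obtain ⟨hbsum, _⟩ := Finset.mem_piAntidiag.1 hb
        rw [if_neg, mul_zero, mul_zero]
        intro hall
        apply hmm
        rw [← hbsum, ← hsum_s]
        exact Finset.sum_congr rfl fun i hi => (hall i hi).symm
    -- assemble
    have hswap : (∑ j, c a (e j) * (∑ i, v (e j) i * ξ i)^k)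
        = ∑ u : Fin n → Fin (k+1), c a u * (∑ i, v u i * ξ i)^k :=
      Fintype.sum_equiv e _ _ (fun j => rfl)
    rw [hswap]
    set K : ℝ := (((k:ℝ) + 1) * (k.choose m0) * δ ^ m0 * (Nat.multinomial s a))⁻¹ with hK
    have hcu : ∀ u, c a u = K * ∏ i ∈ s, E (aF a i) (u i) := fun u => rfl
    symm
    calc (∑ u : Fin n → Fin (k+1), c a u * (∑ i, v u i * ξ i)^k)
        = ∑ u : Fin n → Fin (k+1), ∑ m ∈ Finset.range (k+1),
            K * ((δ^m * ξ i0 ^ (k-m) * (k.choose m)) *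
              ((∏ i ∈ s, E (aF a i) (u i)) * S u ^ m)) := by
          refine Finset.sum_congr rfl fun u _ => ?_
          rw [hcu u, hdot u, add_pow, Finset.mul_sum]
          refine Finset.sum_congr rfl fun m _ => ?_
          rw [mul_pow]
          ring
      _ = ∑ m ∈ Finset.range (k+1), K * ((δ^m * ξ i0 ^ (k-m) * (k.choose m)) *
            (∑ u : Fin n → Fin (k+1), (∏ i ∈ s, E (aF a i) (u i)) * S u ^ m)) := by
          rw [Finset.sum_comm]
          refine Finset.sum_congr rfl fun m _ => ?_
          rw [← Finset.mul_sum, ← Finset.mul_sum]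
      _ = K * ((δ^m0 * ξ i0 ^ (k-m0) * (k.choose m0)) *
            (((k:ℝ)+1) * (Nat.multinomial s a : ℝ) * ∏ i ∈ s, ξ i ^ a i)) := by
          rw [Finset.sum_eq_single_of_mem m0 (Finset.mem_range.2 (by omega))
            (fun m hmr hne => by
              rw [hU m (Nat.lt_succ_iff.1 (Finset.mem_range.1 hmr)), if_neg hne,
                mul_zero, mul_zero])]
          rw [hU m0 (by omega), if_pos rfl]
      _ = ξ i0 ^ (a i0) * ∏ i ∈ s, ξ i ^ a i := by
          have hc1 : ((k:ℝ) + 1) ≠ 0 := by positivity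
          have hc2 : ((k.choose m0 : ℕ) : ℝ) ≠ 0 :=
            Nat.cast_ne_zero.2 (Nat.choose_pos (by omega)).ne'
          have hc3 : δ ^ m0 ≠ 0 := pow_ne_zero _ (ne_of_gt hδ)
          have hc4 : ((Nat.multinomial s a : ℕ) : ℝ) ≠ 0 :=
            Nat.cast_ne_zero.2 (Nat.multinomial_pos s a).ne'
          have hk0 : k - m0 = a i0 := by
            rw [hm0]; have := hai i0; omega
          rw [hk0, hK]
          field_simp
      _ = ∏ i, ξ i ^ a i :=
          Finset.mul_prod_erase Finset.univ (fun i => ξ i ^ a i) (Finset.mem_univ i0)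
end

section
/- Let k and n be positive integers. Suppose vectors v₁, …, v_N ∈ ℝ^n and real constants c_{α,j} satisfy ξ^α = Σ_{j=1}^N c_{α,j} (v_j · ξ)^k for every multi-index α with |α| = k and all ξ ∈ ℝ^n. Then there exist δ > 0 and, for each multi-index α with |α| = k and each j, a function Q_{α,j} defined and continuous on {u = (u₁,…,u_N) ∈ (ℝ^n)^N : max_j |u_j − v_j| < δ} with Q_{α,j}(v₁,…,v_N) = c_{α,j}, such that whenever max_j |u_j − v_j| < δ, the identity ξ^α = Σ_{j=1}^N Q_{α,j}(u)·(u_j · ξ)^k holds for all ξ ∈ ℝ^n and all |α| = k. -/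
open Set MeasureTheory Filter
open scoped Topology

private lemma monom_lin_indep' {n k : ℕ}
    (r : ↥(Finset.piAntidiag (Finset.univ : Finset (Fin n)) k) → ℝ)
    (hz : ∀ ξ : Fin n → ℝ, ∑ b, r b * ∏ i, ξ i ^ b.1 i = 0) : ∀ b, r b = 0 := by
  classical
  set d : ↥(Finset.piAntidiag (Finset.univ : Finset (Fin n)) k) → (Fin n →₀ ℕ) :=
    fun b => Finsupp.equivFunOnFinite.symm b.1 with hd
  have hdinj : Function.Injective d := fun a b hab => by
    apply Subtype.ext
    exact Finsupp.equivFunOnFinite.symm.injective hab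
  set q : MvPolynomial (Fin n) ℝ := ∑ b, MvPolynomial.monomial (d b) (r b) with hq
  have heval : ∀ ξ : Fin n → ℝ, MvPolynomial.eval ξ q = ∑ b, r b * ∏ i, ξ i ^ b.1 i := by
    intro ξ
    rw [hq, map_sum]
    refine Finset.sum_congr rfl fun b _ => ?_
    rw [MvPolynomial.eval_monomial]
    congr 1
    rw [Finsupp.prod_fintype]
    · rfl
    · intro i; rfl
  have hq0 : q = 0 := by
    apply MvPolynomial.funext
    intro ξ
    rw [heval, hz ξ, map_zero]
  intro b
  have := congrArg (MvPolynomial.coeff (d b)) hq0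
  rw [hq, MvPolynomial.coeff_zero] at this
  rw [MvPolynomial.coeff_sum] at this
  rw [Finset.sum_eq_single b] at this
  · rwa [MvPolynomial.coeff_monomial, if_pos rfl] at this
  · intro b' _ hne
    rw [MvPolynomial.coeff_monomial, if_neg (fun e => hne (hdinj e))]
  · intro hb; exact absurd (Finset.mem_univ b) hb

/-- Lemma 3.5 (ii): the representation of degree-`k` monomials by `k`-th powers of linear
forms is stable under perturbation of the directions, with coefficients `Q_{a,j}(u)`
depending continuously on `u` and equal to `c_{a,j}` at `u = v`. -/
theorem monomials_from_powers_perturbation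
    (k n N : ℕ) (hk : 0 < k) (hn : 0 < n)
    (v : Fin N → (Fin n → ℝ)) (c : (Fin n → ℕ) → Fin N → ℝ)
    (h : ∀ a : Fin n → ℕ, (∑ i, a i) = k → ∀ ξ : Fin n → ℝ,
      (∏ i, ξ i ^ a i) = ∑ j, c a j * (∑ i, v j i * ξ i) ^ k) :
    ∃ δ > 0, ∃ Q : (Fin n → ℕ) → Fin N → ((Fin N → (Fin n → ℝ)) → ℝ),
      (∀ a : Fin n → ℕ, (∑ i, a i) = k → ∀ j : Fin N,
        ContinuousOn (Q a j)
          {u : Fin N → (Fin n → ℝ) |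
            ∀ j', Real.sqrt (∑ i, (u j' i - v j' i) ^ 2) < δ} ∧
        Q a j v = c a j) ∧
      ∀ u : Fin N → (Fin n → ℝ),
        (∀ j', Real.sqrt (∑ i, (u j' i - v j' i) ^ 2) < δ) →
        ∀ a : Fin n → ℕ, (∑ i, a i) = k → ∀ ξ : Fin n → ℝ,
          (∏ i, ξ i ^ a i) = ∑ j, Q a j u * (∑ i, u j i * ξ i) ^ k := by
  classical
  set ι := ↥(Finset.piAntidiag (Finset.univ : Finset (Fin n)) k) with hι
  set B : (Fin N → Fin n → ℝ) → Matrix ι ι ℝ :=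
    fun u a b => ∑ j, c a.1 j * ((Nat.multinomial Finset.univ b.1 : ℝ) * ∏ i, u j i ^ b.1 i)
    with hB
  -- multinomial expansion
  have expand : ∀ (w ξ : Fin n → ℝ), (∑ i, w i * ξ i) ^ k
      = ∑ b : ι, ((Nat.multinomial Finset.univ b.1 : ℝ) * ∏ i, w i ^ b.1 i)
          * ∏ i, ξ i ^ b.1 i := by
    intro w ξ
    rw [Finset.sum_coe_sort (Finset.piAntidiag Finset.univ k)
      (fun b => ((Nat.multinomial Finset.univ b : ℝ) * ∏ i, w i ^ b i) * ∏ i, ξ i ^ b i)]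
    rw [Finset.sum_pow_eq_sum_piAntidiag]
    refine Finset.sum_congr rfl fun b hb => ?_
    rw [mul_assoc, ← Finset.prod_mul_distrib]
    simp [mul_pow]
  -- key reformulation
  have key : ∀ (u : Fin N → Fin n → ℝ) (a : ι) (ξ : Fin n → ℝ),
      ∑ j, c a.1 j * (∑ i, u j i * ξ i) ^ k
        = ∑ b : ι, B u a b * ∏ i, ξ i ^ b.1 i := by
    intro u a ξ
    have step : ∀ j, c a.1 j * (∑ i, u j i * ξ i) ^ k
        = ∑ b : ι, c a.1 j * (((Nat.multinomial Finset.univ b.1 : ℝ)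
            * ∏ i, u j i ^ b.1 i) * ∏ i, ξ i ^ b.1 i) := by
      intro j
      rw [expand (u j) ξ, Finset.mul_sum]
    rw [Finset.sum_congr rfl fun j _ => step j, Finset.sum_comm]
    refine Finset.sum_congr rfl fun b _ => ?_
    simp only [hB, Finset.sum_mul]
    refine Finset.sum_congr rfl fun j _ => ?_
    ring
  -- B v is the identity matrix
  have memk : ∀ a : ι, (∑ i, a.1 i) = k := by
    intro a
    have := a.2
    rw [Finset.mem_piAntidiag] at this
    exact this.1
  have hBv : B v = 1 := by
    ext a b
    have hz : ∀ ξ : Fin n → ℝ,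
        ∑ b : ι, (B v a b - (1 : Matrix ι ι ℝ) a b) * ∏ i, ξ i ^ b.1 i = 0 := by
      intro ξ
      have h1 := h a.1 (memk a) ξ
      rw [key v a ξ] at h1
      have h2 : (∏ i, ξ i ^ a.1 i)
          = ∑ b : ι, (1 : Matrix ι ι ℝ) a b * ∏ i, ξ i ^ b.1 i := by
        rw [Finset.sum_eq_single a]
        · rw [Matrix.one_apply_eq, one_mul]
        · intro b' _ hne
          rw [Matrix.one_apply_ne' hne, zero_mul]
        · intro hb; exact absurd (Finset.mem_univ a) hb
      simp only [sub_mul, Finset.sum_sub_distrib]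
      rw [← h1, ← h2, sub_self]
    have h3 := monom_lin_indep' _ hz b
    exact sub_eq_zero.mp h3
  -- continuity of B and its determinant
  have hBcont : Continuous B := by
    refine continuous_pi fun a => continuous_pi fun b => ?_
    simp only [hB]
    refine continuous_finset_sum _ fun j _ => Continuous.mul continuous_const ?_
    refine Continuous.mul continuous_const ?_
    refine continuous_finset_prod _ fun i _ => ?_
    exact ((continuous_apply i).comp (continuous_apply j)).pow _
  have hdetc : Continuous fun u => (B u).det := hBcont.matrix_det
  -- choose δ
  have hopen : IsOpen {u : Fin N → Fin n → ℝ | (B u).det ≠ 0} :=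
    isOpen_compl_iff.mpr (isClosed_singleton.preimage hdetc)
  have hvmem : v ∈ {u : Fin N → Fin n → ℝ | (B u).det ≠ 0} := by
    simp only [Set.mem_setOf_eq, hBv, Matrix.det_one]
    exact one_ne_zero
  obtain ⟨δ, hδ, hball⟩ := Metric.isOpen_iff.mp hopen v hvmem
  -- the δ-set is inside the ball
  have hsub : ∀ u : Fin N → Fin n → ℝ,
      (∀ j', Real.sqrt (∑ i, (u j' i - v j' i) ^ 2) < δ) → (B u).det ≠ 0 := by
    intro u hu
    apply hball
    rw [Metric.mem_ball, dist_pi_lt_iff hδ]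
    intro j
    rw [dist_pi_lt_iff hδ]
    intro i
    calc dist (u j i) (v j i) = Real.sqrt ((u j i - v j i) ^ 2) := by
          rw [Real.sqrt_sq_eq_abs, Real.dist_eq]
      _ ≤ Real.sqrt (∑ i', (u j i' - v j i') ^ 2) := by
          exact Real.sqrt_le_sqrt (Finset.single_le_sum
            (f := fun i' => (u j i' - v j i') ^ 2)
            (fun i' _ => sq_nonneg _) (Finset.mem_univ i))
      _ < δ := hu j
  -- define Q
  set Q : (Fin n → ℕ) → Fin N → ((Fin N → (Fin n → ℝ)) → ℝ) :=
    fun a j u =>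
      if ha : a ∈ Finset.piAntidiag (Finset.univ : Finset (Fin n)) k then
        ∑ b : ι, (B u)⁻¹ ⟨a, ha⟩ b * c b.1 j
      else 0 with hQ
  refine ⟨δ, hδ, Q, ?_, ?_⟩
  · intro a ha j
    have hamem : a ∈ Finset.piAntidiag (Finset.univ : Finset (Fin n)) k := by
      rw [Finset.mem_piAntidiag]
      exact ⟨ha, fun i _ => Finset.mem_univ i⟩
    constructor
    · -- continuity
      have hQeq : ∀ u, Q a j u
          = ∑ b : ι, ((B u).det⁻¹ * (B u).adjugate ⟨a, hamem⟩ b) * c b.1 j := by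
        intro u
        rw [hQ]
        simp only [dif_pos hamem]
        refine Finset.sum_congr rfl fun b _ => ?_
        rw [Matrix.inv_def, Matrix.smul_apply, Ring.inverse_eq_inv, smul_eq_mul]
      have hc : ContinuousOn (fun u => ∑ b : ι,
          ((B u).det⁻¹ * (B u).adjugate ⟨a, hamem⟩ b) * c b.1 j)
          {u : Fin N → (Fin n → ℝ) |
            ∀ j', Real.sqrt (∑ i, (u j' i - v j' i) ^ 2) < δ} := by
        refine continuousOn_finset_sum _ fun b _ => ContinuousOn.mul ?_ continuousOn_const
        refine ContinuousOn.mul ?_ ?_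
        · exact ContinuousOn.inv₀ hdetc.continuousOn fun u hu => hsub u hu
        · exact (((continuous_apply b).comp ((continuous_apply
            (⟨a, hamem⟩ : ι)).comp hBcont.matrix_adjugate))).continuousOn
      exact hc.congr fun u _ => hQeq u
    · -- value at v
      show (if ha : a ∈ Finset.piAntidiag (Finset.univ : Finset (Fin n)) k then
        ∑ b : ι, (B v)⁻¹ ⟨a, ha⟩ b * c b.1 j else 0) = c a j
      rw [dif_pos hamem, hBv, inv_one]
      rw [Finset.sum_eq_single (⟨a, hamem⟩ : ι)]
      · rw [Matrix.one_apply_eq, one_mul]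
      · intro b' _ hne
        rw [Matrix.one_apply_ne' hne, zero_mul]
      · intro hb; exact absurd (Finset.mem_univ _) hb
  · -- the identity
    intro u hu a ha ξ
    have hamem : a ∈ Finset.piAntidiag (Finset.univ : Finset (Fin n)) k := by
      rw [Finset.mem_piAntidiag]
      exact ⟨ha, fun i _ => Finset.mem_univ i⟩
    have hdet : IsUnit (B u).det := isUnit_iff_ne_zero.mpr (hsub u hu)
    set a' : ι := ⟨a, hamem⟩ with ha'
    have step1 : ∀ j : Fin N, Q a j u * (∑ i, u j i * ξ i) ^ k
        = ∑ b : ι, (B u)⁻¹ a' b * (c b.1 j * (∑ i, u j i * ξ i) ^ k) := by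
      intro j
      rw [hQ]
      simp only [dif_pos hamem]
      rw [Finset.sum_mul]
      refine Finset.sum_congr rfl fun b _ => ?_
      ring
    calc (∏ i, ξ i ^ a i)
        = ∑ b : ι, (1 : Matrix ι ι ℝ) a' b * ∏ i, ξ i ^ b.1 i := by
          rw [Finset.sum_eq_single a']
          · rw [Matrix.one_apply_eq, one_mul]
          · intro b' _ hne
            rw [Matrix.one_apply_ne' hne, zero_mul]
          · intro hb; exact absurd (Finset.mem_univ _) hb
      _ = ∑ b : ι, ((B u)⁻¹ * B u) a' b * ∏ i, ξ i ^ b.1 i := by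
          rw [Matrix.nonsing_inv_mul _ hdet]
      _ = ∑ b' : ι, (∑ b : ι, (B u)⁻¹ a' b * B u b b') * ∏ i, ξ i ^ b'.1 i := by
          refine Finset.sum_congr rfl fun b' _ => ?_
          rw [Matrix.mul_apply]
      _ = ∑ b : ι, (B u)⁻¹ a' b * (∑ j, c b.1 j * (∑ i, u j i * ξ i) ^ k) := by
          symm
          rw [Finset.sum_congr rfl fun (b : ι) (_ : b ∈ Finset.univ) => by
            rw [key u b ξ, Finset.mul_sum]]
          rw [Finset.sum_comm]
          refine Finset.sum_congr rfl fun b' _ => ?_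
          rw [Finset.sum_mul]
          refine Finset.sum_congr rfl fun b _ => ?_
          ring
      _ = ∑ j, Q a j u * (∑ i, u j i * ξ i) ^ k := by
          rw [Finset.sum_congr rfl fun (b : ι) (_ : b ∈ Finset.univ) =>
            Finset.mul_sum Finset.univ
              (fun j => c b.1 j * (∑ i, u j i * ξ i) ^ k) ((B u)⁻¹ a' b)]
          rw [Finset.sum_comm]
          exact Finset.sum_congr rfl fun j _ => (step1 j).symm
end
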